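/- arXiv:2502.10442 — 2 statements merged into one kernel-verified Lean document; each statement's English description precedes it below -/
import Mathlib

section
/- Let A = [A₁ A₂] ∈ ℝ^{n×(d + k)} be a block matrix where A₁ ∈ ℝ^{n×d} has full column rank and A₂ ∈ ℝ^{n×k}, with d ≤ n and AA^⊤ invertible. Then the first diagonal entry of the orthogonal projection onto the row space of A satisfies e₁^⊤ A^⊤(AA^⊤)^{-1}A e₁ ≥ s_min(A₁)² / (s_min(A₁)² + s_max(A₂)²), where s_min(A₁) is the smallest singular value of A₁, s_max(A₂) is the largest singular value of A₂, and e₁ is the first standard basis vector. -/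
open Matrix

noncomputable section

section helpers

variable {m : Type*} [Fintype m] [DecidableEq m]

lemma dot_sq_le_dot_mul_dot (u w : m → ℝ) :
    (u ⬝ᵥ w) ^ 2 ≤ (u ⬝ᵥ u) * (w ⬝ᵥ w) := by
  simpa [dotProduct, sq] using Finset.sum_mul_sq_le_sq_mul_sq Finset.univ u w

lemma quadform_decomp {C : Matrix m m ℝ} (hC : C.IsHermitian) (x : m → ℝ) :
    ∃ y : m → ℝ, x ⬝ᵥ (C *ᵥ x) = ∑ i, hC.eigenvalues i * y i ^ 2 ∧
      x ⬝ᵥ x = ∑ i, y i ^ 2 := by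
  set U : Matrix m m ℝ := (hC.eigenvectorUnitary : Matrix m m ℝ) with hU
  have hUstar : star U = Uᵀ := by
    rw [Matrix.star_eq_conjTranspose, conjTranspose_eq_transpose_of_trivial]
  have hUU : U * star U = 1 := Matrix.mem_unitaryGroup_iff.mp hC.eigenvectorUnitary.2
  refine ⟨Uᵀ *ᵥ x, ?_, ?_⟩
  · conv_lhs => rw [hC.spectral_theorem, Unitary.conjStarAlgAut_apply]
    rw [hUstar, ← mulVec_mulVec, ← mulVec_mulVec, dotProduct_mulVec, ← mulVec_transpose]
    simp only [dotProduct, mulVec_diagonal]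
    refine Finset.sum_congr rfl fun i _ => ?_
    simp [Function.comp, sq]; ring
  · have h1 : U *ᵥ (Uᵀ *ᵥ x) = x := by
      rw [mulVec_mulVec, ← hUstar, hUU, one_mulVec]
    calc x ⬝ᵥ x = (U *ᵥ (Uᵀ *ᵥ x)) ⬝ᵥ x := by rw [h1]
    _ = (Uᵀ *ᵥ x) ⬝ᵥ (Uᵀ *ᵥ x) := by
        rw [dotProduct_comm, dotProduct_mulVec, ← mulVec_transpose]
    _ = ∑ i, (Uᵀ *ᵥ x) i ^ 2 := by simp [dotProduct, sq]

lemma quadform_le_iSup {C : Matrix m m ℝ} (hC : C.IsHermitian) (x : m → ℝ) :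
    x ⬝ᵥ (C *ᵥ x) ≤ (⨆ i, hC.eigenvalues i) * (x ⬝ᵥ x) := by
  obtain ⟨y, h1, h2⟩ := quadform_decomp hC x
  rw [h1, h2, Finset.mul_sum]
  refine Finset.sum_le_sum fun i _ => ?_
  exact mul_le_mul_of_nonneg_right (le_ciSup (Set.Finite.bddAbove (Set.finite_range _)) i)
    (sq_nonneg _)

lemma iInf_le_quadform {C : Matrix m m ℝ} (hC : C.IsHermitian) (x : m → ℝ) :
    (⨅ i, hC.eigenvalues i) * (x ⬝ᵥ x) ≤ x ⬝ᵥ (C *ᵥ x) := by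
  obtain ⟨y, h1, h2⟩ := quadform_decomp hC x
  rw [h1, h2, Finset.mul_sum]
  refine Finset.sum_le_sum fun i _ => ?_
  exact mul_le_mul_of_nonneg_right (ciInf_le (Set.Finite.bddBelow (Set.finite_range _)) i)
    (sq_nonneg _)

open scoped MatrixOrder in
lemma psd_cauchy_schwarz {M : Matrix m m ℝ} (hM : M.PosSemidef) (u w : m → ℝ) :
    (u ⬝ᵥ (M *ᵥ w)) ^ 2 ≤ (u ⬝ᵥ (M *ᵥ u)) * (w ⬝ᵥ (M *ᵥ w)) := by
  set S := CFC.sqrt M with hS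
  have hSS : S * S = M := CFC.sqrt_mul_sqrt_self M hM.nonneg
  have hSsymm : Sᵀ = S := by
    have := (CFC.sqrt_nonneg M).posSemidef.1
    rwa [IsHermitian, conjTranspose_eq_transpose_of_trivial] at this
  have key : ∀ a b : m → ℝ, a ⬝ᵥ (M *ᵥ b) = (S *ᵥ a) ⬝ᵥ (S *ᵥ b) := by
    intro a b
    rw [← hSS, ← mulVec_mulVec, dotProduct_mulVec, ← mulVec_transpose, hSsymm]
  rw [key u w, key u u, key w w]
  exact dot_sq_le_dot_mul_dot _ _

end helpers

set_option maxHeartbeats 1000000 in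
/-- block-matrix projection lower bound. With `A = [A₁ A₂]`,
`e₁ᵀ Aᵀ(AAᵀ)⁻¹A e₁ ≥ s_min(A₁)² / (s_min(A₁)² + s_max(A₂)²)`, where squared
singular values are the eigenvalues of the corresponding Gram matrices. -/
theorem block_projection_lower_bound (n d k : ℕ) (hd : 0 < d) (hdn : d ≤ n)
    (A₁ : Matrix (Fin n) (Fin d) ℝ) (A₂ : Matrix (Fin n) (Fin k) ℝ)
    (hrank : A₁.rank = d)
    (A : Matrix (Fin n) (Fin d ⊕ Fin k) ℝ) (hA : A = Matrix.fromCols A₁ A₂)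
    (hinv : IsUnit (A * Aᵀ))
    (h₁ : (A₁ᵀ * A₁).IsHermitian) (h₂ : (A₂ᵀ * A₂).IsHermitian)
    (sminSq smaxSq : ℝ)
    (hsmin : sminSq = ⨅ i, h₁.eigenvalues i)
    (hsmax : smaxSq = ⨆ i, h₂.eigenvalues i)
    (e₁ : Fin d ⊕ Fin k → ℝ)
    (he₁ : e₁ = fun j => if j = Sum.inl ⟨0, hd⟩ then 1 else 0) :
    sminSq / (sminSq + smaxSq) ≤ e₁ ⬝ᵥ (Aᵀ *ᵥ ((A * Aᵀ)⁻¹ *ᵥ (A *ᵥ e₁))) := by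
  classical
  have hne : Nonempty (Fin d) := ⟨⟨0, hd⟩⟩
  set e : Fin d → ℝ := fun i => if i = ⟨0, hd⟩ then 1 else 0 with he
  have hee : e ⬝ᵥ e = 1 := by
    simp [he, dotProduct, ite_mul]
  have he₁elim : e₁ = Sum.elim e 0 := by
    funext j
    cases j with
    | inl j => simp [he₁, he]
    | inr j => simp [he₁, he]
  set v : Fin n → ℝ := A₁ *ᵥ e with hv
  have hAe₁ : A *ᵥ e₁ = v := by
    rw [hA, he₁elim, fromCols_mulVec_sumElim, hv]; simp
  -- eigenvalue positivity for B = A₁ᵀ * A₁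
  have hpsdB : (A₁ᵀ * A₁).PosSemidef := by
    have := posSemidef_conjTranspose_mul_self A₁
    rwa [conjTranspose_eq_transpose_of_trivial] at this
  have hrankB : (A₁ᵀ * A₁).rank = d := by rw [rank_transpose_mul_self, hrank]
  have heignn : ∀ i, 0 ≤ h₁.eigenvalues i := fun i => hpsdB.eigenvalues_nonneg i
  have heigpos : ∀ i, 0 < h₁.eigenvalues i := by
    intro i
    rcases (heignn i).lt_or_eq with h | h
    · exact h
    · exfalso
      have hcard := h₁.rank_eq_card_non_zero_eigs
      rw [hrankB] at hcard
      have hlt : Fintype.card {j // h₁.eigenvalues j ≠ 0} < Fintype.card (Fin d) :=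
        Fintype.card_subtype_lt (x := i) (by simp [← h])
      rw [Fintype.card_fin] at hlt
      omega
  have hsminpos : 0 < sminSq := by
    rw [hsmin]
    obtain ⟨i, hi⟩ := exists_eq_ciInf_of_finite (f := h₁.eigenvalues)
    rw [← hi]; exact heigpos i
  have hpsd2 : (A₂ᵀ * A₂).PosSemidef := by
    have := posSemidef_conjTranspose_mul_self A₂
    rwa [conjTranspose_eq_transpose_of_trivial] at this
  have hsmaxnn : 0 ≤ smaxSq := by
    rw [hsmax]
    rcases isEmpty_or_nonempty (Fin k) with hk | hk
    · simp [Real.iSup_of_isEmpty]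
    · obtain ⟨i, hi⟩ := exists_eq_ciSup_of_finite (f := h₂.eigenvalues)
      rw [← hi]; exact hpsd2.eigenvalues_nonneg i
  -- B is invertible
  have hdetB : IsUnit (A₁ᵀ * A₁).det := by
    rw [h₁.det_eq_prod_eigenvalues]
    refine (Finset.prod_pos fun i _ => ?_).ne'.isUnit
    simpa using heigpos i
  have hBBinv : (A₁ᵀ * A₁) * (A₁ᵀ * A₁)⁻¹ = 1 := mul_nonsing_inv _ hdetB
  set w : Fin d → ℝ := (A₁ᵀ * A₁)⁻¹ *ᵥ e with hw
  have hBw : (A₁ᵀ * A₁) *ᵥ w = e := by rw [hw, mulVec_mulVec, hBBinv, one_mulVec]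
  set x : Fin n → ℝ := A₁ *ᵥ w with hx
  have hAtx : A₁ᵀ *ᵥ x = e := by rw [hx, mulVec_mulVec, hBw]
  have hvx : v ⬝ᵥ x = 1 := by
    rw [hv, dotProduct_comm, dotProduct_mulVec, ← mulVec_transpose, hAtx, hee]
  -- s = x ⬝ x
  set s : ℝ := x ⬝ᵥ x with hs
  have hs0 : 0 ≤ s := Finset.sum_nonneg fun i _ => mul_self_nonneg _
  have hwe : w ⬝ᵥ e = s := by
    rw [hs]
    conv_rhs => rw [hx, dotProduct_comm, dotProduct_mulVec, ← mulVec_transpose, hAtx]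
    exact dotProduct_comm w e
  have hlow : sminSq * (w ⬝ᵥ w) ≤ s := by
    have h := iInf_le_quadform h₁ w
    rw [hBw, ← hsmin, dotProduct_comm, hwe] at h
    exact h
  have hcs1 : s ^ 2 ≤ (w ⬝ᵥ w) := by
    have := dot_sq_le_dot_mul_dot w e
    rwa [hee, mul_one, hwe] at this
  have hkey : sminSq * s ≤ 1 := by
    rcases hs0.eq_or_lt with h0 | h0
    · rw [← h0, mul_zero]; exact zero_le_one
    · nlinarith [mul_le_mul_of_nonneg_left hcs1 hsminpos.le, hlow, h0]
  -- t part
  set y : Fin k → ℝ := A₂ᵀ *ᵥ x with hy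
  set t : ℝ := y ⬝ᵥ y with ht
  have ht0 : 0 ≤ t := Finset.sum_nonneg fun i _ => mul_self_nonneg _
  have hxt : x ⬝ᵥ (A₂ *ᵥ y) = t := by
    rw [dotProduct_mulVec, ← mulVec_transpose, ← hy, ht]
  have hAy : (A₂ *ᵥ y) ⬝ᵥ (A₂ *ᵥ y) = y ⬝ᵥ ((A₂ᵀ * A₂) *ᵥ y) := by
    conv_lhs => rw [dotProduct_comm, dotProduct_mulVec, ← mulVec_transpose]
    rw [mulVec_mulVec]
    exact dotProduct_comm _ _
  have hup : y ⬝ᵥ ((A₂ᵀ * A₂) *ᵥ y) ≤ smaxSq * t := by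
    have h := quadform_le_iSup h₂ y
    rwa [← hsmax, ← ht] at h
  have htb : t ≤ smaxSq * s := by
    have hcs2 := dot_sq_le_dot_mul_dot x (A₂ *ᵥ y)
    rw [hxt, ← hs, hAy] at hcs2
    rcases ht0.eq_or_lt with h0 | h0
    · rw [← h0]; exact mul_nonneg hsmaxnn hs0
    · nlinarith [mul_le_mul_of_nonneg_left hup hs0, hcs2, h0]
  -- M = A Aᵀ
  have hM_eq : A * Aᵀ = A₁ * A₁ᵀ + A₂ * A₂ᵀ := by
    rw [hA, transpose_fromCols, fromCols_mul_fromRows]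
  have hxMx : x ⬝ᵥ ((A * Aᵀ) *ᵥ x) = 1 + t := by
    rw [hM_eq, add_mulVec, dotProduct_add]
    congr 1
    · rw [← mulVec_mulVec, dotProduct_mulVec, ← mulVec_transpose, hAtx, hee]
    · rw [← mulVec_mulVec, ← hy, hxt]
  have hMdet : IsUnit (A * Aᵀ).det := (isUnit_iff_isUnit_det _).mp hinv
  have hMM : (A * Aᵀ) * (A * Aᵀ)⁻¹ = 1 := mul_nonsing_inv _ hMdet
  have hMpsd : (A * Aᵀ).PosSemidef := by
    have := posSemidef_self_mul_conjTranspose A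
    rwa [conjTranspose_eq_transpose_of_trivial] at this
  have hMsymm : (A * Aᵀ)ᵀ = A * Aᵀ := by rw [transpose_mul, transpose_transpose]
  -- rewrite the goal
  rw [dotProduct_mulVec, vecMul_transpose, hAe₁]
  set u : Fin n → ℝ := (A * Aᵀ)⁻¹ *ᵥ v with hu
  have hMu : (A * Aᵀ) *ᵥ u = v := by rw [hu, mulVec_mulVec, hMM, one_mulVec]
  have hcs := psd_cauchy_schwarz hMpsd u x
  have hux : u ⬝ᵥ ((A * Aᵀ) *ᵥ x) = 1 := by
    rw [dotProduct_mulVec, ← mulVec_transpose, hMsymm, hMu]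
    exact hvx
  have huu : u ⬝ᵥ ((A * Aᵀ) *ᵥ u) = v ⬝ᵥ u := by rw [hMu, dotProduct_comm]
  rw [hux, huu, hxMx, one_pow] at hcs
  clear_value u v x w y e s t
  have h1t : (0:ℝ) < 1 + t := by linarith
  have hQ0 : 0 ≤ v ⬝ᵥ u := by
    by_contra hneg
    push_neg at hneg
    have := mul_neg_of_neg_of_pos hneg h1t
    linarith
  have hsum : 0 < sminSq + smaxSq := by linarith
  rw [div_le_iff₀ hsum]
  have hstep : sminSq * (1 + t) ≤ sminSq + smaxSq := by
    nlinarith [mul_le_mul_of_nonneg_left htb hsminpos.le,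
      mul_le_mul_of_nonneg_left hkey hsmaxnn]
  nlinarith [mul_le_mul_of_nonneg_left hstep hQ0,
    mul_le_mul_of_nonneg_left hcs hsminpos.le]
end
end

section
/- Let A ∈ ℝ^{n×p} with AA^⊤ invertible, let ε ∈ ℝ^n, and let β̂_A = A^⊤(AA^⊤)^{-1}(Aβ + ε). Then the risk satisfies the deterministic bound R(β̂_A) ≤ (pγ + 2)·(‖P_{(A^⊤)^⊥}β‖ + ‖A^⊤(AA^⊤)^{-1}ε‖)² + σ², where P_{(A^⊤)^⊥} = I_p − A^⊤(AA^⊤)^{-1}A is the orthogonal projection onto the orthogonal complement of the row space of A. -/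
open Matrix

noncomputable section

/-- Squared Euclidean norm of a vector in `ℝ^k`. -/
def sqnorm {k : ℕ} (v : Fin k → ℝ) : ℝ := ∑ i, (v i) ^ 2

/-- Euclidean norm of a vector in `ℝ^k`. -/
def enorm {k : ℕ} (v : Fin k → ℝ) : ℝ := Real.sqrt (sqnorm v)

/-- Ground-truth regression parameters `β = W (WᵀW + I)⁻¹ θ`. -/
def betaStar {d p : ℕ} (W : Matrix (Fin p) (Fin d) ℝ) (θ : Fin d → ℝ) : Fin p → ℝ :=
  W *ᵥ ((Wᵀ * W + 1)⁻¹ *ᵥ θ)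

/-- Noise variance `σ² = θᵀ (WᵀW + I)⁻¹ θ`. -/
def sigmaSq {d p : ℕ} (W : Matrix (Fin p) (Fin d) ℝ) (θ : Fin d → ℝ) : ℝ :=
  θ ⬝ᵥ ((Wᵀ * W + 1)⁻¹ *ᵥ θ)

/-- Risk: `R(b) = σ² + (b-β)ᵀ Σ (b-β)` with `Σ = W Wᵀ + I`. -/
def risk {d p : ℕ} (W : Matrix (Fin p) (Fin d) ℝ) (θ : Fin d → ℝ) (b : Fin p → ℝ) : ℝ :=
  sigmaSq W θ + (b - betaStar W θ) ⬝ᵥ ((W * Wᵀ + 1) *ᵥ (b - betaStar W θ))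

lemma sqnorm_nonneg' {k : ℕ} (v : Fin k → ℝ) : 0 ≤ sqnorm v :=
  Finset.sum_nonneg fun _ _ => sq_nonneg _

lemma sqnorm_eq_dot {k : ℕ} (v : Fin k → ℝ) : sqnorm v = v ⬝ᵥ v := by
  simp [sqnorm, dotProduct, sq]

lemma enorm_sq' {k : ℕ} (v : Fin k → ℝ) : (_root_.enorm v) ^ 2 = sqnorm v :=
  Real.sq_sqrt (sqnorm_nonneg' v)

lemma cs_sq {k : ℕ} (u v : Fin k → ℝ) : (u ⬝ᵥ v) ^ 2 ≤ (u ⬝ᵥ u) * (v ⬝ᵥ v) := by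
  have h := Finset.sum_mul_sq_le_sq_mul_sq Finset.univ u v
  simpa [dotProduct, sq] using h

lemma cs' {k : ℕ} (u v : Fin k → ℝ) : u ⬝ᵥ v ≤ _root_.enorm u * _root_.enorm v := by
  have h2 : (u ⬝ᵥ v) ^ 2 ≤ sqnorm u * sqnorm v := by
    rw [sqnorm_eq_dot, sqnorm_eq_dot]; exact cs_sq u v
  have he : 0 ≤ _root_.enorm u * _root_.enorm v := mul_nonneg (Real.sqrt_nonneg _) (Real.sqrt_nonneg _)
  nlinarith [enorm_sq' u, enorm_sq' v, sq_nonneg (u ⬝ᵥ v - _root_.enorm u * _root_.enorm v)]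

lemma enorm_neg' {k : ℕ} (v : Fin k → ℝ) : _root_.enorm (-v) = _root_.enorm v := by
  unfold _root_.enorm sqnorm; simp

lemma sqnorm_sub_le {k : ℕ} (u v : Fin k → ℝ) :
    sqnorm (v - u) ≤ (_root_.enorm u + _root_.enorm v) ^ 2 := by
  have h1 : (-u) ⬝ᵥ v ≤ _root_.enorm u * _root_.enorm v := by
    have := cs' (-u) v; rwa [enorm_neg'] at this
  have hd : sqnorm (v - u) = v ⬝ᵥ v - u ⬝ᵥ v - u ⬝ᵥ v + u ⬝ᵥ u := by
    rw [sqnorm_eq_dot, sub_dotProduct, dotProduct_sub, dotProduct_sub,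
      dotProduct_comm v u]
    ring
  simp only [neg_dotProduct, neg_le] at h1
  nlinarith [enorm_sq' u, enorm_sq' v, sqnorm_eq_dot u, sqnorm_eq_dot v]

lemma quad_bound {d p : ℕ} (γ : ℝ) (W : Matrix (Fin p) (Fin d) ℝ)
    (hW : Wᵀ * W = ((p : ℝ) * γ) • (1 : Matrix (Fin d) (Fin d) ℝ))
    (hpγ : 0 ≤ (p : ℝ) * γ) (x : Fin p → ℝ) :
    x ⬝ᵥ ((W * Wᵀ) *ᵥ x) ≤ ((p : ℝ) * γ) * (x ⬝ᵥ x) := by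
  set z := Wᵀ *ᵥ x with hz
  have h1 : x ⬝ᵥ ((W * Wᵀ) *ᵥ x) = z ⬝ᵥ z := by
    rw [← mulVec_mulVec, dotProduct_mulVec, ← mulVec_transpose]
  have h2 : (W *ᵥ z) ⬝ᵥ (W *ᵥ z) = ((p : ℝ) * γ) * (z ⬝ᵥ z) := by
    rw [dotProduct_mulVec, ← mulVec_transpose, mulVec_mulVec, hW, smul_mulVec,
      one_mulVec, smul_dotProduct]
    rfl
  have h3 : x ⬝ᵥ (W *ᵥ z) = z ⬝ᵥ z := by
    rw [dotProduct_mulVec, ← mulVec_transpose]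
  have h4 := cs_sq x (W *ᵥ z)
  rw [h3, h2] at h4
  have hzz : 0 ≤ z ⬝ᵥ z := by rw [← sqnorm_eq_dot]; exact sqnorm_nonneg' z
  have hxx : 0 ≤ x ⬝ᵥ x := by rw [← sqnorm_eq_dot]; exact sqnorm_nonneg' x
  rw [h1]
  rcases eq_or_lt_of_le hzz with h | h
  · nlinarith
  · nlinarith [mul_le_mul_of_nonneg_left h4 (le_of_lt h)]

/-- deterministic risk bound
`R(β̂_A) ≤ (pγ+2)(‖P_{(Aᵀ)⊥}β‖ + ‖Aᵀ(AAᵀ)⁻¹ε‖)² + σ²`. -/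
theorem risk_deterministic_bound (d n p : ℕ) (hd : 0 < d) (hn : 0 < n) (hp : 0 < p)
    (γ : ℝ) (hγ : 0 < γ) (θ : Fin d → ℝ) (W : Matrix (Fin p) (Fin d) ℝ)
    (hW : Wᵀ * W = ((p : ℝ) * γ) • (1 : Matrix (Fin d) (Fin d) ℝ))
    (A : Matrix (Fin n) (Fin p) ℝ) (hA : IsUnit (A * Aᵀ)) (ε : Fin n → ℝ) :
    risk W θ (Aᵀ *ᵥ ((A * Aᵀ)⁻¹ *ᵥ (A *ᵥ betaStar W θ + ε))) ≤
      ((p : ℝ) * γ + 2) *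
        (_root_.enorm (betaStar W θ - Aᵀ *ᵥ ((A * Aᵀ)⁻¹ *ᵥ (A *ᵥ betaStar W θ))) + _root_.enorm (Aᵀ *ᵥ ((A * Aᵀ)⁻¹ *ᵥ ε))) ^ 2 + sigmaSq W θ := by
  set β := betaStar W θ with hβ
  set u := β - Aᵀ *ᵥ ((A * Aᵀ)⁻¹ *ᵥ (A *ᵥ β)) with hu
  set v := Aᵀ *ᵥ ((A * Aᵀ)⁻¹ *ᵥ ε) with hv
  have hpγ : 0 ≤ (p : ℝ) * γ := by positivity
  have he : Aᵀ *ᵥ ((A * Aᵀ)⁻¹ *ᵥ (A *ᵥ β + ε)) - β = v - u := by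
    rw [mulVec_add, mulVec_add, hu, hv]
    abel
  rw [risk, he]
  set e := v - u with hedef
  have hee : 0 ≤ e ⬝ᵥ e := by rw [← sqnorm_eq_dot]; exact sqnorm_nonneg' e
  have hq : e ⬝ᵥ ((W * Wᵀ + 1) *ᵥ e) ≤ ((p : ℝ) * γ + 1) * (e ⬝ᵥ e) := by
    rw [add_mulVec, one_mulVec, dotProduct_add]
    have := quad_bound γ W hW hpγ e
    nlinarith
  have hsub : e ⬝ᵥ e ≤ (_root_.enorm u + _root_.enorm v) ^ 2 := by
    rw [← sqnorm_eq_dot]; exact sqnorm_sub_le u v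
  have hsq : 0 ≤ (_root_.enorm u + _root_.enorm v) ^ 2 := sq_nonneg _
  nlinarith
end
end
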